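/- If A ∈ F_q^{n×n} is cyclic (its minimal polynomial equals its characteristic polynomial) and γ ∈ F_q is nonzero, then dim_{F_q} C(A,γ) = deg gcd(m_A^γ(x), m_A(x)), where m_A is the minimal polynomial of A and m_A^γ(x) := γ^{deg m_A} m_A(x/γ). -/

import Mathlib

open Polynomial

/-- The `γ`-twisted polynomial `f^γ(x) := γ^(deg f) · f(x/γ)`. -/
noncomputable def Polynomial.twist {F : Type*} [Field F] (γ : F) (f : Polynomial F) :
    Polynomial F :=
  γ ^ f.natDegree • f.comp (Polynomial.C γ⁻¹ * Polynomial.X)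

namespace TwistAux

open Matrix

variable {F : Type*} [Field F] [DecidableEq F] {n : ℕ}

/-- Evaluation `p ↦ p(A) *ᵥ v` as a linear map. -/
noncomputable def pev (A : Matrix (Fin n) (Fin n) F) (v : Fin n → F) :
    F[X] →ₗ[F] (Fin n → F) where
  toFun p := (aeval A p) *ᵥ v
  map_add' p q := by simp [Matrix.add_mulVec]
  map_smul' c p := by simp [Matrix.smul_mulVec]

@[simp] lemma pev_apply (A : Matrix (Fin n) (Fin n) F) (v : Fin n → F) (p : F[X]) :
    pev A v p = (aeval A p) *ᵥ v := rfl

lemma pev_mul (A : Matrix (Fin n) (Fin n) F) (v : Fin n → F) (p q : F[X]) :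
    pev A v (p * q) = (aeval A p) *ᵥ pev A v q := by
  simp [Matrix.mulVec_mulVec]

lemma matrix_eq_zero_of_mulVec (M : Matrix (Fin n) (Fin n) F)
    (h : ∀ z, M *ᵥ z = 0) : M = 0 := by
  ext i j
  have := congrFun (h (Pi.single j 1)) i
  simpa [Matrix.mulVec_single] using this

/-- For any divisor `q` of the minimal polynomial there is a vector whose
annihilator ideal is exactly `(q)`. -/
theorem exists_ann_vector (A : Matrix (Fin n) (Fin n) F) {q : F[X]}
    (hq : q ∣ minpoly F A) :
    ∃ v, (aeval A q) *ᵥ v = 0 ∧ ∀ r, (aeval A r) *ᵥ v = 0 → q ∣ r := by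
  have hint : IsIntegral F A := Matrix.isIntegral A
  have hm0 : minpoly F A ≠ 0 := minpoly.ne_zero hint
  revert hq
  induction q using UniqueFactorizationMonoid.induction_on_coprime with
  | h0 =>
    intro h
    exact absurd (zero_dvd_iff.mp h) hm0
  | @h1 u hu =>
    exact fun _ => ⟨0, by simp, fun r _ => hu.dvd⟩
  | @hpr p i hp =>
    intro hdvd
    rcases Nat.eq_zero_or_pos i with rfl | hi
    · exact ⟨0, by simp, fun r _ => by simpa using (isUnit_one).dvd⟩
    obtain ⟨s, hs⟩ := hdvd
    set c : F[X] := p ^ (i - 1) * s with hc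
    have hpc : minpoly F A = p * c := by
      rw [hs, hc, ← mul_assoc, ← pow_succ']
      congr 2
      omega
    have hc0 : c ≠ 0 := by
      intro h
      apply hm0
      rw [hpc, h, mul_zero]
    have hcdeg : c.degree < (minpoly F A).degree := by
      have hp0 : 0 < p.degree := degree_pos_of_irreducible hp.irreducible
      have : (minpoly F A).degree = p.degree + c.degree := by
        rw [hpc, degree_mul]
      rw [this]
      have hp1 : 0 < p.natDegree := natDegree_pos_iff_degree_pos.mpr hp0
      rcases Polynomial.degree_eq_natDegree hc0 with hcc
      rcases Polynomial.degree_eq_natDegree hp.ne_zero with hpp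
      rw [hcc, hpp, ← Nat.cast_add]
      exact_mod_cast by omega
    have hac : aeval A c ≠ 0 := by
      intro h
      have := minpoly.dvd F A h
      exact hc0 (eq_zero_of_dvd_of_degree_lt this hcdeg)
    obtain ⟨u, hu⟩ : ∃ u, (aeval A c) *ᵥ u ≠ 0 := by
      by_contra h
      push_neg at h
      exact hac (matrix_eq_zero_of_mulVec _ h)
    refine ⟨(aeval A s) *ᵥ u, ?_, ?_⟩
    · rw [Matrix.mulVec_mulVec, ← _root_.map_mul, ← hs, minpoly.aeval, Matrix.zero_mulVec]
    · intro r hr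
      by_contra hnd
      obtain ⟨j, hj, hgj⟩ := (dvd_prime_pow hp i).mp (gcd_dvd_right r (p ^ i))
      have hjlt : j < i := by
        rcases Nat.lt_or_ge j i with h | h
        · exact h
        · have hij : i = j := le_antisymm h hj
          subst hij
          exact absurd (hgj.symm.dvd.trans (gcd_dvd_left r (p ^ i))) hnd
      obtain ⟨a, b, hab⟩ := exists_gcd_eq_mul_add_mul r (p ^ i)
      apply hu
      obtain ⟨w, hw⟩ := hgj.symm
      have e2 : (aeval A (r * s)) *ᵥ u = 0 := by
        rw [_root_.map_mul, ← Matrix.mulVec_mulVec]; exact hr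
      have e3p : (aeval A (p ^ i * s)) *ᵥ u = 0 := by
        rw [← hs, minpoly.aeval, Matrix.zero_mulVec]
      have key : (aeval A (p ^ (i - 1 - j) * s * gcd r (p ^ i))) *ᵥ u = 0 := by
        have e1 : p ^ (i - 1 - j) * s * gcd r (p ^ i)
            = (p ^ (i - 1 - j) * a) * (r * s) + (p ^ (i - 1 - j) * b) * (p ^ i * s) := by
          rw [hab]; ring
        have t1 : (aeval A ((p ^ (i - 1 - j) * a) * (r * s))) *ᵥ u = 0 := by
          rw [_root_.map_mul, ← Matrix.mulVec_mulVec, e2, Matrix.mulVec_zero]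
        have t2 : (aeval A ((p ^ (i - 1 - j) * b) * (p ^ i * s))) *ᵥ u = 0 := by
          rw [_root_.map_mul, ← Matrix.mulVec_mulVec, e3p, Matrix.mulVec_zero]
        rw [e1, map_add, Matrix.add_mulVec, t1, t2, add_zero]
      have e3 : c * (w : F[X]) = p ^ (i - 1 - j) * s * gcd r (p ^ i) := by
        rw [← hw, hc]
        have : p ^ (i - 1) = p ^ (i - 1 - j) * p ^ j := by
          rw [← pow_add]
          congr 1
          omega
        rw [this]
        ring
      have e4 : c = (↑w⁻¹ : F[X]) * (p ^ (i - 1 - j) * s * gcd r (p ^ i)) := by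
        rw [← e3, mul_comm c (↑w : F[X]), ← mul_assoc, Units.inv_mul, one_mul]
      rw [e4, _root_.map_mul, ← Matrix.mulVec_mulVec, key, Matrix.mulVec_zero]
  | @hcp x y hrel hx hy =>
    intro hdvd
    obtain ⟨vx, hvx0, hvx⟩ := hx ((dvd_mul_right x y).trans hdvd)
    obtain ⟨vy, hvy0, hvy⟩ := hy ((dvd_mul_left y x).trans hdvd)
    have hco : IsCoprime x y := hrel.isCoprime
    refine ⟨vx + vy, ?_, ?_⟩
    · have t1 : (aeval A (x * y)) *ᵥ vx = 0 := by
        rw [mul_comm, _root_.map_mul, ← Matrix.mulVec_mulVec, hvx0, Matrix.mulVec_zero]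
      have t2 : (aeval A (x * y)) *ᵥ vy = 0 := by
        rw [_root_.map_mul, ← Matrix.mulVec_mulVec, hvy0, Matrix.mulVec_zero]
      rw [Matrix.mulVec_add, t1, t2, add_zero]
    · intro r hr
      have hxy : ∀ z w : F[X], ∀ v0 : Fin n → F, (aeval A z) *ᵥ v0 = 0 →
          (aeval A (w * z)) *ᵥ v0 = 0 := by
        intro z w v0 h0
        rw [_root_.map_mul, ← Matrix.mulVec_mulVec, h0, Matrix.mulVec_zero]
      have h1 : x ∣ r * y := by
        apply hvx
        have ha : (aeval A (r * y)) *ᵥ (vx + vy) = 0 := by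
          have := hxy r y _ hr
          rwa [mul_comm y r] at this
        have hb : (aeval A (r * y)) *ᵥ vy = 0 := hxy y r _ hvy0
        rw [Matrix.mulVec_add, hb, add_zero] at ha
        exact ha
      have h1' : y ∣ r * x := by
        apply hvy
        have ha : (aeval A (r * x)) *ᵥ (vx + vy) = 0 := by
          have := hxy r x _ hr
          rwa [mul_comm x r] at this
        have hb : (aeval A (r * x)) *ᵥ vx = 0 := hxy x r _ hvx0
        rw [Matrix.mulVec_add, hb, zero_add] at ha
        exact ha
      exact hco.mul_dvd (hco.dvd_of_dvd_mul_right h1) (hco.symm.dvd_of_dvd_mul_right h1')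


variable (A : Matrix (Fin n) (Fin n) F) (v : Fin n → F)

/-- Restriction of `pev` to polynomials of degree `< k`. -/
noncomputable def pevLT (k : ℕ) : degreeLT F k →ₗ[F] (Fin n → F) :=
  (pev A v).comp (Submodule.subtype _)

@[simp] lemma pevLT_apply (k : ℕ) (p : degreeLT F k) :
    pevLT A v k p = (aeval A (p : F[X])) *ᵥ v := rfl

lemma finrank_degreeLT (k : ℕ) : Module.finrank F (degreeLT F k) = k := by
  rw [(Polynomial.degreeLTEquiv F k).finrank_eq, Module.finrank_fin_fun]

instance (k : ℕ) : FiniteDimensional F (degreeLT F k) :=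
  Module.Finite.equiv (Polynomial.degreeLTEquiv F k).symm

variable {A v}

lemma pevLT_injective (hv : ∀ r, (aeval A r) *ᵥ v = 0 → minpoly F A ∣ r)
    (hdeg : (minpoly F A).natDegree = n) :
    Function.Injective (pevLT A v n) := by
  have hm0 : minpoly F A ≠ 0 := minpoly.ne_zero (Matrix.isIntegral A)
  rw [← LinearMap.ker_eq_bot, LinearMap.ker_eq_bot']
  rintro ⟨p, hp⟩ h
  have hdvd : minpoly F A ∣ p := hv p h
  have : p = 0 := by
    refine eq_zero_of_dvd_of_degree_lt hdvd ?_
    calc p.degree < (n : WithBot ℕ) := Polynomial.mem_degreeLT.mp hp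
      _ = (minpoly F A).degree := by
        rw [Polynomial.degree_eq_natDegree hm0, hdeg]
  exact Subtype.ext this

lemma pevLT_bijective (hv : ∀ r, (aeval A r) *ᵥ v = 0 → minpoly F A ∣ r)
    (hdeg : (minpoly F A).natDegree = n) :
    Function.Bijective (pevLT A v n) := by
  have hinj := pevLT_injective hv hdeg
  refine ⟨hinj, ?_⟩
  rw [← LinearMap.injective_iff_surjective_of_finrank_eq_finrank
    (by rw [finrank_degreeLT, Module.finrank_fin_fun])]
  exact hinj

lemma le_finrank_of_degreeLT {k : ℕ} (S : Submodule F (Fin n → F))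
    (φ : degreeLT F k →ₗ[F] (Fin n → F)) (hinj : Function.Injective φ)
    (hran : ∀ x, φ x ∈ S) : k ≤ Module.finrank F S := by
  have h2 : Function.Injective (φ.codRestrict S hran) := fun a b hab =>
    hinj (congrArg Subtype.val hab)
  have := LinearMap.finrank_le_finrank_of_injective h2
  rwa [finrank_degreeLT] at this

/-- The key dimension formula: for a cyclic matrix `A` with cyclic vector `v`,
the kernel of `p(A)` has dimension `deg gcd(p, m_A)`. -/
theorem finrank_ker_aeval (hv : ∀ r, (aeval A r) *ᵥ v = 0 → minpoly F A ∣ r)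
    (hdeg : (minpoly F A).natDegree = n) (p : F[X]) :
    Module.finrank F (LinearMap.ker (Matrix.mulVecLin (aeval A p)))
      = (gcd p (minpoly F A)).natDegree := by
  have hm0 : minpoly F A ≠ 0 := minpoly.ne_zero (Matrix.isIntegral A)
  set m := minpoly F A with hm
  have hma : aeval A m = 0 := minpoly.aeval F A
  set d := gcd p m with hd
  have hd0 : d ≠ 0 := fun h => hm0 (by
    have := gcd_dvd_right p m
    rw [← hd, h] at this
    exact zero_dvd_iff.mp this)
  obtain ⟨m', hm'⟩ : d ∣ m := gcd_dvd_right p m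
  have hm'0 : m' ≠ 0 := fun h => hm0 (by rw [hm', h, mul_zero])
  have hknd : d.natDegree + m'.natDegree = n := by
    rw [← hdeg, hm', Polynomial.natDegree_mul hd0 hm'0]
  -- the two kernels agree
  have hker : LinearMap.ker (Matrix.mulVecLin (aeval A p))
      = LinearMap.ker (Matrix.mulVecLin (aeval A d)) := by
    ext u
    simp only [LinearMap.mem_ker, Matrix.mulVecLin_apply]
    constructor
    · intro h
      obtain ⟨a, b, hab⟩ := exists_gcd_eq_mul_add_mul p m
      rw [← hd] at hab
      rw [hab, map_add, Matrix.add_mulVec, mul_comm p a, mul_comm m b,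
        _root_.map_mul, _root_.map_mul, ← Matrix.mulVec_mulVec, ← Matrix.mulVec_mulVec,
        h, Matrix.mulVec_zero, hma, Matrix.zero_mulVec, Matrix.mulVec_zero, add_zero]
    · intro h
      obtain ⟨c, hc⟩ : d ∣ p := gcd_dvd_left p m
      rw [hc, mul_comm, _root_.map_mul, ← Matrix.mulVec_mulVec, h, Matrix.mulVec_zero]
  rw [hker]
  -- lower bound on the kernel
  have hle1 : d.natDegree ≤
      Module.finrank F (LinearMap.ker (Matrix.mulVecLin (aeval A d))) := by
    refine le_finrank_of_degreeLT _
      ((pev A v).comp ((LinearMap.mulLeft F m').comp (Submodule.subtype _))) ?_ ?_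
    · rintro ⟨r₁, hr₁⟩ ⟨r₂, hr₂⟩ h
      simp only [LinearMap.comp_apply, Submodule.subtype_apply, LinearMap.mulLeft_apply,
        pev_apply] at h
      have h0 : (aeval A (m' * r₁ - m' * r₂)) *ᵥ v = 0 := by
        rw [map_sub, Matrix.sub_mulVec, h, sub_self]
      have hdvd := hv _ h0
      rw [← mul_sub] at hdvd
      rw [hm'] at hdvd
      have : d ∣ r₁ - r₂ := by
        rw [mul_comm] at hdvd
        exact (mul_dvd_mul_iff_left hm'0).mp hdvd
      have hsub : r₁ - r₂ = 0 := by
        refine eq_zero_of_dvd_of_degree_lt this ?_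
        have h1 : (r₁ - r₂).degree < (d.natDegree : WithBot ℕ) := by
          rcases Polynomial.mem_degreeLT.mp hr₁ with h₁
          rcases Polynomial.mem_degreeLT.mp hr₂ with h₂
          calc (r₁ - r₂).degree ≤ max r₁.degree r₂.degree := Polynomial.degree_sub_le _ _
            _ < (d.natDegree : WithBot ℕ) := max_lt h₁ h₂
        rwa [Polynomial.degree_eq_natDegree hd0]
      exact Subtype.ext (sub_eq_zero.mp hsub)
    · rintro ⟨r, hr⟩
      simp only [LinearMap.mem_ker, LinearMap.comp_apply, Submodule.subtype_apply,
        LinearMap.mulLeft_apply, pev_apply, Matrix.mulVecLin_apply]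
      rw [Matrix.mulVec_mulVec, ← _root_.map_mul, ← mul_assoc, ← hm', mul_comm m r,
        _root_.map_mul, ← Matrix.mulVec_mulVec, hma, Matrix.zero_mulVec,
        Matrix.mulVec_zero]
  -- lower bound on the range
  have hle2 : m'.natDegree ≤
      Module.finrank F (LinearMap.range (Matrix.mulVecLin (aeval A d))) := by
    refine le_finrank_of_degreeLT _
      ((pev A v).comp ((LinearMap.mulLeft F d).comp (Submodule.subtype _))) ?_ ?_
    · rintro ⟨r₁, hr₁⟩ ⟨r₂, hr₂⟩ h
      simp only [LinearMap.comp_apply, Submodule.subtype_apply, LinearMap.mulLeft_apply,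
        pev_apply] at h
      have h0 : (aeval A (d * r₁ - d * r₂)) *ᵥ v = 0 := by
        rw [map_sub, Matrix.sub_mulVec, h, sub_self]
      have hdvd := hv _ h0
      rw [← mul_sub, hm'] at hdvd
      have hdvd' : m' ∣ r₁ - r₂ := (mul_dvd_mul_iff_left hd0).mp hdvd
      have hsub : r₁ - r₂ = 0 := by
        refine eq_zero_of_dvd_of_degree_lt hdvd' ?_
        have h1 : (r₁ - r₂).degree < (m'.natDegree : WithBot ℕ) := by
          rcases Polynomial.mem_degreeLT.mp hr₁ with h₁
          rcases Polynomial.mem_degreeLT.mp hr₂ with h₂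
          calc (r₁ - r₂).degree ≤ max r₁.degree r₂.degree := Polynomial.degree_sub_le _ _
            _ < (m'.natDegree : WithBot ℕ) := max_lt h₁ h₂
        rwa [Polynomial.degree_eq_natDegree hm'0]
      exact Subtype.ext (sub_eq_zero.mp hsub)
    · rintro ⟨r, hr⟩
      simp only [LinearMap.comp_apply, Submodule.subtype_apply, LinearMap.mulLeft_apply,
        pev_apply, LinearMap.mem_range]
      exact ⟨(aeval A r) *ᵥ v, by
        rw [Matrix.mulVecLin_apply, Matrix.mulVec_mulVec, ← _root_.map_mul]⟩
  have hrn := LinearMap.finrank_range_add_finrank_ker (Matrix.mulVecLin (aeval A d))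
  rw [Module.finrank_fin_fun] at hrn
  omega

lemma pow_intertwine {A B X : Matrix (Fin n) (Fin n) F} (h : A * X = X * B) :
    ∀ k : ℕ, A ^ k * X = X * B ^ k
  | 0 => by simp
  | k + 1 => by
    rw [pow_succ, pow_succ, mul_assoc, h, ← mul_assoc, pow_intertwine h k, mul_assoc]

lemma aeval_intertwine {A B X : Matrix (Fin n) (Fin n) F} (h : A * X = X * B) (r : F[X]) :
    (aeval A r) * X = X * (aeval B r) := by
  induction r using Polynomial.induction_on' with
  | add p q hp hq => rw [map_add, map_add, add_mul, mul_add, hp, hq]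
  | monomial k c =>
    rw [aeval_monomial, aeval_monomial, mul_assoc, pow_intertwine h k, ← mul_assoc,
      Algebra.commutes c X, mul_assoc]

lemma aeval_twist {γ : F} (hγ : γ ≠ 0) (M : Matrix (Fin n) (Fin n) F) (f : F[X]) :
    aeval M (f.twist γ) = γ ^ f.natDegree • aeval (γ⁻¹ • M) f := by
  rw [Polynomial.twist, _root_.map_smul, aeval_comp]
  congr 2
  rw [_root_.map_mul, aeval_C, aeval_X, Algebra.smul_def]

lemma comp_linear_ne_zero {a : F} (ha : a ≠ 0) {f : F[X]} (hf : f ≠ 0) :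
    f.comp (C a * X) ≠ 0 := by
  intro h
  apply hf
  have : (f.comp (C a * X)).comp (C a⁻¹ * X) = f := by
    rw [Polynomial.comp_assoc, mul_comp, C_comp, X_comp, ← mul_assoc, ← C_mul,
      mul_inv_cancel₀ ha, C_1, one_mul, comp_X]
  rw [← this, h, zero_comp]

lemma twist_ne_zero {γ : F} (hγ : γ ≠ 0) {f : F[X]} (hf : f ≠ 0) : f.twist γ ≠ 0 := by
  rw [Polynomial.twist, smul_ne_zero_iff]
  exact ⟨pow_ne_zero _ hγ, comp_linear_ne_zero (inv_ne_zero hγ) hf⟩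

lemma twist_natDegree {γ : F} (hγ : γ ≠ 0) (f : F[X]) :
    (f.twist γ).natDegree = f.natDegree := by
  rcases eq_or_ne f 0 with rfl | hf
  · rw [Polynomial.twist]; simp
  · rw [Polynomial.twist, Polynomial.smul_eq_C_mul,
      Polynomial.natDegree_C_mul (pow_ne_zero _ hγ), Polynomial.natDegree_comp,
      Polynomial.natDegree_C_mul_X _ (inv_ne_zero hγ), mul_one]

lemma minpoly_smul_facts {γ : F} (hγ : γ ≠ 0) (A : Matrix (Fin n) (Fin n) F) :
    Associated ((minpoly F A).twist γ) (minpoly F (γ • A)) ∧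
      (minpoly F (γ • A)).natDegree = (minpoly F A).natDegree := by
  have hint : IsIntegral F A := Matrix.isIntegral A
  have hintB : IsIntegral F (γ • A) := Matrix.isIntegral _
  have hm0 : minpoly F A ≠ 0 := minpoly.ne_zero hint
  have hmB0 : minpoly F (γ • A) ≠ 0 := minpoly.ne_zero hintB
  have hsmul : γ⁻¹ • (γ • A) = A := by rw [smul_smul, inv_mul_cancel₀ hγ, one_smul]
  have h1 : minpoly F (γ • A) ∣ (minpoly F A).twist γ := by
    apply minpoly.dvd
    rw [aeval_twist hγ, hsmul, minpoly.aeval, smul_zero]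
  have h2 : minpoly F A ∣ (minpoly F (γ • A)).twist γ⁻¹ := by
    apply minpoly.dvd
    rw [aeval_twist (inv_ne_zero hγ), inv_inv, minpoly.aeval, smul_zero]
  have hnd : (minpoly F (γ • A)).natDegree = (minpoly F A).natDegree := by
    have hle1 : (minpoly F (γ • A)).natDegree ≤ (minpoly F A).natDegree := by
      have := Polynomial.natDegree_le_of_dvd h1 (twist_ne_zero hγ hm0)
      rwa [twist_natDegree hγ] at this
    have hle2 : (minpoly F A).natDegree ≤ (minpoly F (γ • A)).natDegree := by
      have := Polynomial.natDegree_le_of_dvd h2 (twist_ne_zero (inv_ne_zero hγ) hmB0)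
      rwa [twist_natDegree (inv_ne_zero hγ)] at this
    omega
  refine ⟨?_, hnd⟩
  obtain ⟨c, hc⟩ := h1
  have hc0 : c ≠ 0 := by
    intro h
    exact twist_ne_zero hγ hm0 (by rw [hc, h, mul_zero])
  have hcd : c.natDegree = 0 := by
    have := congrArg Polynomial.natDegree hc
    rw [twist_natDegree hγ, Polynomial.natDegree_mul hmB0 hc0, hnd] at this
    omega
  have hcu : IsUnit c := by
    rw [Polynomial.eq_C_of_natDegree_eq_zero hcd]
    refine Polynomial.isUnit_C.mpr (isUnit_iff_ne_zero.mpr ?_)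
    intro h
    apply hc0
    rw [Polynomial.eq_C_of_natDegree_eq_zero hcd, h, map_zero]
  rw [hc]
  exact associated_mul_unit_left _ _ hcu

end TwistAux

open TwistAux Matrix

/-- If `A ∈ F^{n×n}` is cyclic (its minimal polynomial equals its characteristic
polynomial) and `γ ≠ 0`, then `dim C(A,γ) = deg gcd(m_A^γ, m_A)`, where `C(A,γ)` is the kernel
of the linear map `X ↦ A*X - γ•(X*A)`. -/
theorem finrank_twisted_centralizer_of_cyclic {F : Type*} [Field F] [Fintype F] [DecidableEq F]
    {n : ℕ} (A : Matrix (Fin n) (Fin n) F) (γ : F) (hγ : γ ≠ 0)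
    (hcyc : minpoly F A = A.charpoly) :
    Module.finrank F
      (LinearMap.ker ((LinearMap.mulLeft F A - γ • LinearMap.mulRight F A) :
        Matrix (Fin n) (Fin n) F →ₗ[F] Matrix (Fin n) (Fin n) F)) =
      (gcd ((minpoly F A).twist γ) (minpoly F A)).natDegree := by
  have hint : IsIntegral F A := Matrix.isIntegral A
  have hm0 : minpoly F A ≠ 0 := minpoly.ne_zero hint
  have hdeg : (minpoly F A).natDegree = n := by
    rw [hcyc, Matrix.charpoly_natDegree_eq_dim, Fintype.card_fin]
  have hgcd0 : gcd ((minpoly F A).twist γ) (minpoly F A) ≠ 0 := by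
    intro h
    exact hm0 (zero_dvd_iff.mp (h ▸ gcd_dvd_right _ _))
  rcases Nat.eq_zero_or_pos n with hn | hn
  · have h1 : Module.finrank F
        (LinearMap.ker ((LinearMap.mulLeft F A - γ • LinearMap.mulRight F A) :
          Matrix (Fin n) (Fin n) F →ₗ[F] Matrix (Fin n) (Fin n) F)) ≤ n * n := by
      have := Submodule.finrank_le
        (LinearMap.ker ((LinearMap.mulLeft F A - γ • LinearMap.mulRight F A) :
          Matrix (Fin n) (Fin n) F →ₗ[F] Matrix (Fin n) (Fin n) F))
      rwa [Module.finrank_matrix, Fintype.card_fin, Module.finrank_self, mul_one] at this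
    have h2 : (gcd ((minpoly F A).twist γ) (minpoly F A)).natDegree ≤ n := by
      have := Polynomial.natDegree_le_of_dvd
        (gcd_dvd_right ((minpoly F A).twist γ) (minpoly F A)) hm0
      omega
    subst hn
    simp only [Nat.mul_zero, Nat.le_zero] at h1 h2
    rw [h1, h2]
  -- main case
  set B := γ • A with hB
  have hintB : IsIntegral F B := Matrix.isIntegral B
  have hmB0 : minpoly F B ≠ 0 := minpoly.ne_zero hintB
  obtain ⟨hassoc, hndB⟩ := minpoly_smul_facts hγ A
  have ndB : (minpoly F B).natDegree = n := by rw [← hB] at hndB; omega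
  obtain ⟨v, hv0, hv⟩ := exists_ann_vector A (dvd_refl (minpoly F A))
  obtain ⟨w, hw0, hw⟩ := exists_ann_vector B (dvd_refl (minpoly F B))
  have hbijB := pevLT_bijective hw ndB
  set K := (LinearMap.ker ((LinearMap.mulLeft F A - γ • LinearMap.mulRight F A) :
      Matrix (Fin n) (Fin n) F →ₗ[F] Matrix (Fin n) (Fin n) F)) with hK
  have hKmem : ∀ X : Matrix (Fin n) (Fin n) F, X ∈ K ↔ A * X = X * B := by
    intro X
    rw [hK, LinearMap.mem_ker, LinearMap.sub_apply, LinearMap.smul_apply,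
      LinearMap.mulLeft_apply, LinearMap.mulRight_apply, sub_eq_zero, hB,
      Matrix.mul_smul]
  let Φ : K →ₗ[F] (Fin n → F) :=
    { toFun := fun X => (X : Matrix (Fin n) (Fin n) F) *ᵥ w
      map_add' := fun X Y => by
        simp [Matrix.add_mulVec]
      map_smul' := fun c X => by
        simp [Matrix.smul_mulVec] }
  have hΦinj : Function.Injective Φ := by
    rw [← LinearMap.ker_eq_bot, LinearMap.ker_eq_bot']
    rintro ⟨X, hX⟩ h
    have hXw : X *ᵥ w = 0 := h
    refine Subtype.ext (matrix_eq_zero_of_mulVec _ fun z => ?_)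
    obtain ⟨q, hq⟩ := hbijB.2 z
    rw [← hq, pevLT_apply, Matrix.mulVec_mulVec,
      ← aeval_intertwine ((hKmem X).mp hX), ← Matrix.mulVec_mulVec, hXw,
      Matrix.mulVec_zero]
  have hrange : LinearMap.range Φ
      = LinearMap.ker (Matrix.mulVecLin (aeval A (minpoly F B))) := by
    apply le_antisymm
    · rintro u ⟨⟨X, hX⟩, rfl⟩
      simp only [LinearMap.mem_ker, Matrix.mulVecLin_apply]
      show aeval A (minpoly F B) *ᵥ ((X : Matrix (Fin n) (Fin n) F) *ᵥ w) = 0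
      rw [Matrix.mulVec_mulVec, aeval_intertwine ((hKmem X).mp hX), minpoly.aeval,
        mul_zero, Matrix.zero_mulVec]
    · intro u hu
      rw [LinearMap.mem_ker, Matrix.mulVecLin_apply] at hu
      set eB := LinearEquiv.ofBijective (pevLT B w n) hbijB with heB
      set η : (Fin n → F) →ₗ[F] (Fin n → F) :=
        (pevLT A u n).comp (eB.symm : (Fin n → F) →ₗ[F] degreeLT F n) with hη
      have hmBmonic : (minpoly F B).Monic := minpoly.monic hintB
      have key : ∀ q : F[X], η ((aeval B q) *ᵥ w) = (aeval A q) *ᵥ u := by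
        intro q
        set r := q %ₘ (minpoly F B) with hr
        have hrmem : r ∈ degreeLT F n := by
          rw [Polynomial.mem_degreeLT]
          calc r.degree < (minpoly F B).degree := degree_modByMonic_lt q hmBmonic
            _ = (n : WithBot ℕ) := by rw [Polynomial.degree_eq_natDegree hmB0, ndB]
        have h1 : (aeval B q) *ᵥ w = (aeval B r) *ᵥ w := by
          conv_lhs => rw [← modByMonic_add_div q (minpoly F B)]
          rw [map_add, Matrix.add_mulVec, _root_.map_mul, ← Matrix.mulVec_mulVec,
            minpoly.aeval, Matrix.zero_mulVec, add_zero]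
        have h2 : (aeval A q) *ᵥ u = (aeval A r) *ᵥ u := by
          conv_lhs => rw [← modByMonic_add_div q (minpoly F B)]
          rw [map_add, Matrix.add_mulVec, mul_comm (minpoly F B) (q /ₘ minpoly F B),
            _root_.map_mul, ← Matrix.mulVec_mulVec, hu, Matrix.mulVec_zero, add_zero]
        have h3 : (aeval B r) *ᵥ w = eB ⟨r, hrmem⟩ := rfl
        rw [h1, h2, h3, hη]
        simp only [LinearMap.comp_apply, LinearEquiv.coe_coe, LinearEquiv.symm_apply_apply]
        rfl
      set M := Matrix.toLin'.symm η with hM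
      have hMv : ∀ z, M *ᵥ z = η z := by
        intro z
        rw [hM, ← Matrix.toLin'_apply, LinearEquiv.apply_symm_apply]
      have hMK : M ∈ K := by
        rw [hKmem]
        have hz0 : A * M - M * B = 0 := by
          apply matrix_eq_zero_of_mulVec
          intro z
          obtain ⟨q, hq⟩ := hbijB.2 z
          have hz : z = (aeval B (q : F[X])) *ᵥ w := hq.symm
          have e1 : (A * M) *ᵥ z = (aeval A (Polynomial.X * (q : F[X]))) *ᵥ u := by
            rw [← Matrix.mulVec_mulVec, hz, hMv, key, Matrix.mulVec_mulVec,
              _root_.map_mul, aeval_X]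
          have hBz : B *ᵥ ((aeval B (q : F[X])) *ᵥ w)
              = (aeval B (Polynomial.X * (q : F[X]))) *ᵥ w := by
            rw [Matrix.mulVec_mulVec, _root_.map_mul, aeval_X]
          have e2 : (M * B) *ᵥ z = (aeval A (Polynomial.X * (q : F[X]))) *ᵥ u := by
            rw [← Matrix.mulVec_mulVec, hz, hBz, hMv, key]
          rw [Matrix.sub_mulVec, e1, e2, sub_self]
        rw [← sub_eq_zero]
        exact hz0
      refine ⟨⟨M, hMK⟩, ?_⟩
      show M *ᵥ w = u
      have : w = (aeval B (1 : F[X])) *ᵥ w := by rw [_root_.map_one, Matrix.one_mulVec]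
      rw [hMv, this, key, _root_.map_one, Matrix.one_mulVec]
  have heq := LinearEquiv.finrank_eq (LinearEquiv.ofInjective Φ hΦinj)
  rw [heq, hrange, finrank_ker_aeval hv hdeg (minpoly F B)]
  -- finally, gcds of associated polynomials have the same degree
  have h12 : gcd ((minpoly F A).twist γ) (minpoly F A) ∣ gcd (minpoly F B) (minpoly F A) :=
    dvd_gcd ((gcd_dvd_left _ _).trans hassoc.dvd) (gcd_dvd_right _ _)
  have h21 : gcd (minpoly F B) (minpoly F A) ∣ gcd ((minpoly F A).twist γ) (minpoly F A) :=
    dvd_gcd ((gcd_dvd_left _ _).trans hassoc.symm.dvd) (gcd_dvd_right _ _)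
  have hg2 : gcd (minpoly F B) (minpoly F A) ≠ 0 := by
    intro h
    exact hm0 (zero_dvd_iff.mp (h ▸ gcd_dvd_right _ _))
  have d1 := Polynomial.natDegree_le_of_dvd h12 hg2
  have d2 := Polynomial.natDegree_le_of_dvd h21 hgcd0
  omega
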